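/- Let 1 ≤ p < ∞ and α > 0. The set PH^p_α of pluriharmonic functions f with ‖f‖_{p,α} < ∞ is closed in L^p_α: if (f_m) is a sequence of pluriharmonic functions with ‖f_m‖_{p,α} < ∞ and f is a measurable function with ‖f_m − f‖_{p,α} → 0, then f agrees almost everywhere with a pluriharmonic function. -/

import Mathlib

open MeasureTheory Metric Complex Filter
open scoped ENNReal Real

noncomputable instance (n : ℕ) : MeasurableSpace (EuclideanSpace ℂ (Fin n)) := borel _
instance (n : ℕ) : BorelSpace (EuclideanSpace ℂ (Fin n)) := ⟨rfl⟩

/-- A function `f : ℂⁿ → ℂ` is pluriharmonic if `f = g + conj h` for entire `g, h`. -/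
def Pluriharmonic {n : ℕ} (f : EuclideanSpace ℂ (Fin n) → ℂ) : Prop :=
  ∃ g h : EuclideanSpace ℂ (Fin n) → ℂ, Differentiable ℂ g ∧ Differentiable ℂ h ∧
    ∀ z, f z = g z + (starRingEnd ℂ) (h z)


/-- Circle average of an entire function equals center value (times 2π). -/
lemma circle_avg (A : ℂ → ℂ) (hA : Differentiable ℂ A) (R : ℝ) (hR : 0 < R) :
    ∫ θ in (0:ℝ)..(2*π), A (circleMap 0 R θ) = (2*π) * A 0 := by
  have h := (hA.differentiableOn (s := closedBall 0 R)).circleIntegral_sub_inv_smul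
      (w := 0) (mem_ball_self hR)
  rw [circleIntegral] at h
  simp only [deriv_circleMap, sub_zero] at h
  have hptw : ∀ θ : ℝ, (circleMap 0 R θ * I) • ((circleMap 0 R θ)⁻¹ • A (circleMap 0 R θ))
      = I • A (circleMap 0 R θ) := by
    intro θ
    have hne : circleMap 0 R θ ≠ 0 := by
      simpa using circleMap_ne_center (c := 0) (R := R) hR.ne' (θ := θ)
    simp only [smul_eq_mul]
    field_simp
  simp only [hptw] at h
  rw [intervalIntegral.integral_smul] at h
  have := h
  rw [smul_eq_mul, smul_eq_mul] at this
  have h2 : I * (∫ θ in (0:ℝ)..(2*π), A (circleMap 0 R θ)) = I * ((2*π) * A 0) := by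
    rw [this]; ring
  exact mul_left_cancel₀ I_ne_zero h2


lemma circleMap2_ne_zero (θ : ℝ) : circleMap 0 2 θ ≠ 0 := by
  simpa using circleMap_ne_center (c := (0:ℂ)) (R := (2:ℝ)) (by norm_num) (θ := θ)

lemma circleMap2_ne_one (θ : ℝ) : circleMap 0 2 θ - 1 ≠ 0 := by
  intro h
  have h2 : ‖circleMap 0 2 θ‖ = 2 := by simp [norm_circleMap_zero]
  rw [sub_eq_zero.1 h] at h2; simp at h2

lemma circleMap2_ne_four (θ : ℝ) : (4 : ℂ) - circleMap 0 2 θ ≠ 0 := by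
  intro h
  have h2 : ‖circleMap 0 2 θ‖ = 2 := by simp [norm_circleMap_zero]
  rw [(sub_eq_zero.1 h).symm] at h2
  norm_num at h2

/-- Cauchy formula at the point 1 on the circle of radius 2. -/
lemma cauchy_at_one (A : ℂ → ℂ) (hA : Differentiable ℂ A) :
    ∫ θ in (0:ℝ)..(2*π), (circleMap 0 2 θ / (circleMap 0 2 θ - 1)) * A (circleMap 0 2 θ)
      = (2*π) * A 1 := by
  have h := (hA.differentiableOn (s := closedBall 0 2)).circleIntegral_sub_inv_smul
      (w := 1) (by simp [mem_ball])
  rw [circleIntegral] at h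
  simp only [deriv_circleMap] at h
  have hptw : ∀ θ : ℝ, (circleMap 0 2 θ * I) • ((circleMap 0 2 θ - 1)⁻¹ • A (circleMap 0 2 θ))
      = I • ((circleMap 0 2 θ / (circleMap 0 2 θ - 1)) * A (circleMap 0 2 θ)) := by
    intro θ
    have hne := circleMap2_ne_one θ
    simp only [smul_eq_mul]
    field_simp
  simp only [hptw] at h
  rw [intervalIntegral.integral_smul] at h
  rw [smul_eq_mul, smul_eq_mul] at h
  have h2 : I * (∫ θ in (0:ℝ)..(2*π), (circleMap 0 2 θ / (circleMap 0 2 θ - 1)) * A (circleMap 0 2 θ))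
      = I * ((2*π) * A 1) := by rw [h]; ring
  exact mul_left_cancel₀ I_ne_zero h2

lemma conj_circleMap2 (θ : ℝ) :
    (starRingEnd ℂ) (circleMap 0 2 θ) = 4 / circleMap 0 2 θ := by
  have h : circleMap 0 2 θ * (starRingEnd ℂ) (circleMap 0 2 θ) = 4 := by
    rw [Complex.mul_conj]
    have h2 : ‖circleMap 0 2 θ‖ = 2 := by simp [norm_circleMap_zero]
    rw [Complex.normSq_eq_norm_sq, h2]
    norm_num
  field_simp [circleMap2_ne_zero θ] at h ⊢
  linear_combination h

lemma conj_kernel (θ : ℝ) :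
    (starRingEnd ℂ) (circleMap 0 2 θ / (circleMap 0 2 θ - 1))
      = 4 / ((4 - circleMap 0 2 θ) ) := by
  rw [map_div₀, map_sub, conj_circleMap2, map_one]
  have h0 := circleMap2_ne_zero θ
  have h1 := circleMap2_ne_one θ
  have h4 := circleMap2_ne_four θ
  field_simp

/-- The conjugate-holomorphic part integrates to zero against the Cauchy kernel. -/
lemma conj_part (B : ℂ → ℂ) (hB : Differentiable ℂ B) (hB0 : B 0 = 0) :
    ∫ θ in (0:ℝ)..(2*π),
        (circleMap 0 2 θ / (circleMap 0 2 θ - 1)) * (starRingEnd ℂ) (B (circleMap 0 2 θ)) = 0 := by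
  -- first : ∮ z⁻¹ • B z = 0 by Cauchy formula (B 0 = 0)
  have h1 := (hB.differentiableOn (s := closedBall 0 2)).circleIntegral_sub_inv_smul
      (w := 0) (by simp [mem_ball])
  rw [hB0, smul_zero] at h1
  -- second : ∮ (4 - z)⁻¹ • B z = 0 since integrand is holomorphic on the closed ball
  have h2 : (∮ z in C(0, 2), (4 - z)⁻¹ • B z) = 0 := by
    apply circleIntegral_eq_zero_of_differentiable_on_off_countable
      (by norm_num : (0:ℝ) ≤ 2) Set.countable_empty
    · intro z hz
      have hne : (4 : ℂ) - z ≠ 0 := by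
        intro h
        have := sub_eq_zero.1 h
        rw [← this] at hz
        simp [mem_closedBall] at hz
        norm_num at hz
      exact ((continuousAt_const.sub continuousAt_id).inv₀ hne).smul hB.continuous.continuousAt
        |>.continuousWithinAt
    · intro z hz
      have hz2 : ‖z‖ < 2 := by simpa [mem_ball] using hz.1
      have hne : (4 : ℂ) - z ≠ 0 := by
        intro h
        have := (sub_eq_zero.1 h)
        rw [← this] at hz2
        norm_num at hz2
      exact (((differentiableAt_const _).sub differentiableAt_id).inv hne).smul
        (hB.differentiableAt)
  -- unfold and combine
  rw [circleIntegral] at h1 h2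
  simp only [deriv_circleMap, sub_zero] at h1 h2
  have hsum := congrArg₂ (· + ·) h1 h2
  simp only [add_zero] at hsum
  rw [← intervalIntegral.integral_add] at hsum
  rotate_left
  · apply Continuous.intervalIntegrable
    apply Continuous.fun_smul (by continuity)
    exact ((continuous_circleMap 0 2).inv₀ circleMap2_ne_zero).smul
      (hB.continuous.comp (continuous_circleMap 0 2))
  · apply Continuous.intervalIntegrable
    apply Continuous.fun_smul (by continuity)
    exact ((continuous_const.sub (continuous_circleMap 0 2)).inv₀ circleMap2_ne_four).smul
      (hB.continuous.comp (continuous_circleMap 0 2))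
  -- pointwise identity
  have hptw : ∀ θ : ℝ,
      (circleMap 0 2 θ * I) • ((circleMap 0 2 θ)⁻¹ • B (circleMap 0 2 θ))
        + (circleMap 0 2 θ * I) • ((4 - circleMap 0 2 θ)⁻¹ • B (circleMap 0 2 θ))
      = I • ((4 / (4 - circleMap 0 2 θ)) * B (circleMap 0 2 θ)) := by
    intro θ
    have h0 := circleMap2_ne_zero θ
    have h4 := circleMap2_ne_four θ
    simp only [smul_eq_mul]
    field_simp
    ring
  simp only [hptw] at hsum
  rw [intervalIntegral.integral_smul] at hsum
  have hT : ∫ θ in (0:ℝ)..(2*π), (4 / (4 - circleMap 0 2 θ)) * B (circleMap 0 2 θ) = 0 := by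
    have := hsum
    rw [smul_eq_mul] at this
    rcases mul_eq_zero.1 this with h | h
    · exact absurd h I_ne_zero
    · exact h
  -- now take conjugates
  have hcong : ∀ θ : ℝ,
      (circleMap 0 2 θ / (circleMap 0 2 θ - 1)) * (starRingEnd ℂ) (B (circleMap 0 2 θ))
        = (starRingEnd ℂ) ((4 / (4 - circleMap 0 2 θ)) * B (circleMap 0 2 θ)) := by
    intro θ
    rw [map_mul, ← conj_kernel θ, Complex.conj_conj]
  simp only [hcong]
  have h2pi : (0:ℝ) ≤ 2*π := by positivity
  rw [intervalIntegral.integral_of_le h2pi] at hT ⊢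
  rw [integral_conj, hT, map_zero]

section aux
variable {n : ℕ}
local notation "E'" => EuclideanSpace ℂ (Fin n)

lemma Pluriharmonic.continuous {f : E' → ℂ} (hf : Pluriharmonic f) : Continuous f := by
  obtain ⟨g, h, hg, hh, he⟩ := hf
  have : f = fun z => g z + (starRingEnd ℂ) (h z) := funext he
  rw [this]
  exact hg.continuous.add (Complex.continuous_conj.comp hh.continuous)

lemma Pluriharmonic.sub {f f' : E' → ℂ} (hf : Pluriharmonic f) (hf' : Pluriharmonic f') :
    Pluriharmonic (fun z => f z - f' z) := by
  obtain ⟨g, h, hg, hh, he⟩ := hf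
  obtain ⟨g', h', hg', hh', he'⟩ := hf'
  exact ⟨fun z => g z - g' z, fun z => h z - h' z, hg.sub hg', hh.sub hh',
    fun z => by simp only [he z, he' z, map_sub]; ring⟩

lemma lineMap_diff (z ζ : E') : Differentiable ℂ (fun lam : ℂ => z + lam • ζ) :=
  (differentiable_id.smul_const ζ).const_add z

/-- mean value property for pluriharmonic functions, along any complex circle. -/
lemma ph_mvp {f : E' → ℂ} (hf : Pluriharmonic f) (z ζ : E') :
    ∫ θ in (0:ℝ)..(2*π), f (z + circleMap 0 1 θ • ζ) = (2*π) * f z := by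
  obtain ⟨g, h, hg, hh, he⟩ := hf
  have hA : Differentiable ℂ (fun lam : ℂ => g (z + lam • ζ)) := hg.comp (lineMap_diff z ζ)
  have hB : Differentiable ℂ (fun lam : ℂ => h (z + lam • ζ)) := hh.comp (lineMap_diff z ζ)
  have h1 := circle_avg _ hA 1 one_pos
  have h2 := circle_avg _ hB 1 one_pos
  have hsplit : ∀ θ : ℝ, f (z + circleMap 0 1 θ • ζ)
      = g (z + circleMap 0 1 θ • ζ) + (starRingEnd ℂ) (h (z + circleMap 0 1 θ • ζ)) :=
    fun θ => he _
  simp only [hsplit]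
  rw [intervalIntegral.integral_add]
  · rw [h1]
    have h2pi : (0:ℝ) ≤ 2*π := by positivity
    rw [intervalIntegral.integral_of_le h2pi, integral_conj,
        ← intervalIntegral.integral_of_le h2pi, h2]
    rw [he z]
    simp only [zero_smul, add_zero, map_mul, map_ofNat, Complex.conj_ofReal]
    ring
  · exact (hg.continuous.comp (continuous_const.add ((continuous_circleMap 0 1).smul continuous_const))).intervalIntegrable _ _
  · exact (Complex.continuous_conj.comp (hh.continuous.comp
      (continuous_const.add ((continuous_circleMap 0 1).smul continuous_const)))).intervalIntegrable _ _

end aux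

lemma kernel_bound (θ : ℝ) : ‖circleMap 0 2 θ / (circleMap 0 2 θ - 1)‖ ≤ 2 := by
  rw [norm_div]
  have h2 : ‖circleMap 0 2 θ‖ = 2 := by simp [norm_circleMap_zero]
  have hlow : (1:ℝ) ≤ ‖circleMap 0 2 θ - 1‖ := by
    have := norm_sub_norm_le (circleMap 0 2 θ) 1
    rw [h2] at this
    simp only [norm_one] at this
    linarith
  rw [h2]
  calc (2:ℝ) / ‖circleMap 0 2 θ - 1‖ ≤ 2 / 1 := by
        apply div_le_div_of_nonneg_left (by norm_num) (by norm_num) hlow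
    _ = 2 := by norm_num

lemma kernel_continuous : Continuous fun θ : ℝ => circleMap 0 2 θ / (circleMap 0 2 θ - 1) :=
  (continuous_circleMap 0 2).div ((continuous_circleMap 0 2).sub continuous_const)
    circleMap2_ne_one

section aux2
variable {n : ℕ}
local notation "E'" => EuclideanSpace ℂ (Fin n)

/-- Recovery of the holomorphic part of a pluriharmonic function by a Cauchy-type integral. -/
lemma ph_recover {f G H : E' → ℂ} (hG : Differentiable ℂ G) (hH : Differentiable ℂ H)
    (hH0 : H 0 = 0) (he : ∀ z, f z = G z + (starRingEnd ℂ) (H z)) (z : E') :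
    ∫ θ in (0:ℝ)..(2*π),
        (circleMap 0 2 θ / (circleMap 0 2 θ - 1)) * f (circleMap 0 2 θ • z)
      = (2*π) * G z := by
  have hA : Differentiable ℂ (fun lam : ℂ => G (lam • z)) := hG.comp (differentiable_id.smul_const z)
  have hB : Differentiable ℂ (fun lam : ℂ => H (lam • z)) := hH.comp (differentiable_id.smul_const z)
  have hB0 : H ((0:ℂ) • z) = 0 := by rw [zero_smul]; exact hH0
  have h1 := cauchy_at_one _ hA
  have h2 := conj_part _ hB hB0
  have hsplit : ∀ θ : ℝ,
      (circleMap 0 2 θ / (circleMap 0 2 θ - 1)) * f (circleMap 0 2 θ • z)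
      = (circleMap 0 2 θ / (circleMap 0 2 θ - 1)) * G (circleMap 0 2 θ • z)
        + (circleMap 0 2 θ / (circleMap 0 2 θ - 1)) * (starRingEnd ℂ) (H (circleMap 0 2 θ • z)) := by
    intro θ; rw [he _]; ring
  simp only [hsplit]
  rw [intervalIntegral.integral_add, h1, h2, one_smul, add_zero]
  · exact ((kernel_continuous).mul (hG.continuous.comp
      ((continuous_circleMap 0 2).smul continuous_const))).intervalIntegrable _ _
  · exact ((kernel_continuous).mul (Complex.continuous_conj.comp (hH.continuous.comp
      ((continuous_circleMap 0 2).smul continuous_const)))).intervalIntegrable _ _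

/-- Uniform closeness on a sphere gives closeness of the Cauchy-type integrals. -/
lemma P_sub_bound {u v : E' → ℂ} (hu : Continuous u) (hv : Continuous v) (z : E') {ε : ℝ}
    (hb : ∀ θ : ℝ, ‖u (circleMap 0 2 θ • z) - v (circleMap 0 2 θ • z)‖ ≤ ε) :
    ‖(∫ θ in (0:ℝ)..(2*π), (circleMap 0 2 θ / (circleMap 0 2 θ - 1)) * u (circleMap 0 2 θ • z))
      - ∫ θ in (0:ℝ)..(2*π), (circleMap 0 2 θ / (circleMap 0 2 θ - 1)) * v (circleMap 0 2 θ • z)‖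
      ≤ 4*π*ε := by
  have hiu : IntervalIntegrable (fun θ : ℝ =>
      (circleMap 0 2 θ / (circleMap 0 2 θ - 1)) * u (circleMap 0 2 θ • z)) volume 0 (2*π) :=
    ((kernel_continuous).mul (hu.comp
      ((continuous_circleMap 0 2).smul continuous_const))).intervalIntegrable _ _
  have hiv : IntervalIntegrable (fun θ : ℝ =>
      (circleMap 0 2 θ / (circleMap 0 2 θ - 1)) * v (circleMap 0 2 θ • z)) volume 0 (2*π) :=
    ((kernel_continuous).mul (hv.comp
      ((continuous_circleMap 0 2).smul continuous_const))).intervalIntegrable _ _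
  rw [← intervalIntegral.integral_sub hiu hiv]
  have hbd := intervalIntegral.norm_integral_le_of_norm_le_const (C := 2*ε)
      (f := fun θ : ℝ => (circleMap 0 2 θ / (circleMap 0 2 θ - 1)) * u (circleMap 0 2 θ • z)
        - (circleMap 0 2 θ / (circleMap 0 2 θ - 1)) * v (circleMap 0 2 θ • z))
      (a := 0) (b := 2*π) ?_
  · calc _ ≤ 2*ε * |2*π - 0| := hbd
      _ = 4*π*ε := by
        rw [sub_zero, _root_.abs_of_nonneg (by positivity : (0:ℝ) ≤ 2*π)]
        ring
  · intro θ hθ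
    rw [← mul_sub, norm_mul]
    have h0 : (0:ℝ) ≤ ε := le_trans (norm_nonneg _) (hb 0)
    calc ‖circleMap 0 2 θ / (circleMap 0 2 θ - 1)‖ * ‖u (circleMap 0 2 θ • z) - v (circleMap 0 2 θ • z)‖
        ≤ 2 * ε := mul_le_mul (kernel_bound θ) (hb θ) (norm_nonneg _) (by norm_num)
      _ = 2*ε := rfl
end aux2

section measure
variable {n : ℕ}
local notation "E'" => EuclideanSpace ℂ (Fin n)

/-- Scalar multiplication by a unit-modulus complex number, as a real-linear isometry. -/
noncomputable def rotE (n : ℕ) (c : ℂ) (hc : ‖c‖ = 1) :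
    EuclideanSpace ℂ (Fin n) ≃ₗᵢ[ℝ] EuclideanSpace ℂ (Fin n) where
  toLinearEquiv :=
    { toFun := fun x => c • x
      invFun := fun x => c⁻¹ • x
      map_add' := smul_add c
      map_smul' := fun r x => smul_comm c r x
      left_inv := fun x => inv_smul_smul₀ (by simp [← norm_pos_iff, hc] : c ≠ 0) x
      right_inv := fun x => smul_inv_smul₀ (by simp [← norm_pos_iff, hc] : c ≠ 0) x }
  norm_map' := fun x => by simp [norm_smul, hc]

@[simp] lemma rotE_apply (c : ℂ) (hc : ‖c‖ = 1) (x : E') : rotE n c hc x = c • x := rfl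

lemma rot_lintegral (c : ℂ) (hc : ‖c‖ = 1) (φ : E' → ℝ≥0∞) :
    ∫⁻ ζ in ball (0:E') 1, φ (c • ζ) = ∫⁻ ζ in ball (0:E') 1, φ ζ := by
  have e := rotE n c hc
  have h := (rotE n c hc).measurePreserving.setLIntegral_comp_emb
    ((rotE n c hc).toHomeomorph.measurableEmbedding) φ (ball (0:E') 1)
  have himg : (rotE n c hc) '' ball (0:E') 1 = ball (0:E') 1 := by
    have := (rotE n c hc).toIsometryEquiv.image_ball (0:E') 1
    simpa using this
  rw [himg] at h
  exact h

lemma transl_lintegral (z : E') (φ : E' → ℝ≥0∞) :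
    ∫⁻ ζ in ball (0:E') 1, φ (z + ζ) = ∫⁻ ζ in ball z 1, φ ζ := by
  have h := (measurePreserving_add_left (volume : Measure E') z).setLIntegral_comp_emb
    ((Homeomorph.addLeft z).measurableEmbedding) φ (ball (0:E') 1)
  have himg : (fun x => z + x) '' ball (0:E') 1 = ball z 1 := by
    ext ξ
    simp only [Set.mem_image, mem_ball]
    constructor
    · rintro ⟨ζ, hζ, rfl⟩
      rwa [dist_eq_norm, add_sub_cancel_left, ← dist_zero_right]
    · intro hξ
      exact ⟨ξ - z, by simpa [dist_zero_right, dist_eq_norm] using hξ, by abel⟩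
  rw [himg] at h
  exact h

/-- Sub-mean value inequality on balls, in `L¹`-form. -/
lemma ph_meanL1 {f : E' → ℂ} (hf : Pluriharmonic f) (z : E') :
    volume (ball (0:E') 1) * ENNReal.ofReal ‖f z‖ ≤ ∫⁻ ζ in ball z 1, ↑‖f ζ‖₊ := by
  have h2pi : (0:ℝ) ≤ 2*π := by positivity
  -- pointwise circle estimate
  have hpt : ∀ ζ : E', ENNReal.ofReal (2*π) * ENNReal.ofReal ‖f z‖
      ≤ ∫⁻ θ in Set.Ioc 0 (2*π), ↑‖f (z + circleMap 0 1 θ • ζ)‖₊ := by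
    intro ζ
    have hmvp := ph_mvp hf z ζ
    have hcont : Continuous fun θ : ℝ => f (z + circleMap 0 1 θ • ζ) :=
      hf.continuous.comp (continuous_const.add ((continuous_circleMap 0 1).smul continuous_const))
    have hnorm : 2*π*‖f z‖ ≤ ∫ θ in (0:ℝ)..(2*π), ‖f (z + circleMap 0 1 θ • ζ)‖ := by
      have h1 : ‖∫ θ in (0:ℝ)..(2*π), f (z + circleMap 0 1 θ • ζ)‖
          ≤ ∫ θ in (0:ℝ)..(2*π), ‖f (z + circleMap 0 1 θ • ζ)‖ :=
        intervalIntegral.norm_integral_le_integral_norm h2pi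
      rw [hmvp] at h1
      rw [show (2*↑π : ℂ) = ((2*π:ℝ):ℂ) by push_cast; ring] at h1
      calc 2*π*‖f z‖ = ‖((2*π:ℝ):ℂ)‖ * ‖f z‖ := by
            rw [Complex.norm_real, Real.norm_eq_abs, _root_.abs_of_nonneg h2pi]
        _ = ‖((2*π:ℝ):ℂ) * f z‖ := (norm_mul _ _).symm
        _ ≤ _ := h1
    have hint : IntegrableOn (fun θ : ℝ => f (z + circleMap 0 1 θ • ζ)) (Set.Ioc 0 (2*π)) volume :=
      hcont.integrableOn_Ioc
    calc ENNReal.ofReal (2*π) * ENNReal.ofReal ‖f z‖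
        = ENNReal.ofReal (2*π*‖f z‖) := by
          rw [ENNReal.ofReal_mul h2pi]
      _ ≤ ENNReal.ofReal (∫ θ in (0:ℝ)..(2*π), ‖f (z + circleMap 0 1 θ • ζ)‖) :=
          ENNReal.ofReal_le_ofReal hnorm
      _ = ∫⁻ θ in Set.Ioc 0 (2*π), ↑‖f (z + circleMap 0 1 θ • ζ)‖₊ := by
          rw [intervalIntegral.integral_of_le h2pi]
          exact ofReal_integral_norm_eq_lintegral_enorm hint
  -- integrate over the unit ball
  have hstep : (ENNReal.ofReal (2*π) * ENNReal.ofReal ‖f z‖) * volume (ball (0:E') 1)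
      ≤ ∫⁻ ζ in ball (0:E') 1, ∫⁻ θ in Set.Ioc 0 (2*π), ↑‖f (z + circleMap 0 1 θ • ζ)‖₊ := by
    rw [← setLIntegral_const]
    exact lintegral_mono fun ζ => hpt ζ
  -- swap the two integrals
  have hmeas : Measurable (Function.uncurry fun (ζ : E') (θ : ℝ) =>
      (↑‖f (z + circleMap 0 1 θ • ζ)‖₊ : ℝ≥0∞)) := by
    apply Measurable.coe_nnreal_ennreal
    apply Continuous.measurable
    apply Continuous.nnnorm
    exact hf.continuous.comp (continuous_const.add
      (((continuous_circleMap 0 1).comp continuous_snd).smul continuous_fst))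
  have hswap : ∫⁻ ζ in ball (0:E') 1, ∫⁻ θ in Set.Ioc 0 (2*π), ↑‖f (z + circleMap 0 1 θ • ζ)‖₊
      = ∫⁻ θ in Set.Ioc 0 (2*π), ∫⁻ ζ in ball (0:E') 1, ↑‖f (z + circleMap 0 1 θ • ζ)‖₊ :=
    lintegral_lintegral_swap hmeas.aemeasurable
  -- rotation invariance of the inner integral
  have hrot : ∀ θ : ℝ, ∫⁻ ζ in ball (0:E') 1, ↑‖f (z + circleMap 0 1 θ • ζ)‖₊
      = ∫⁻ ζ in ball z 1, ↑‖f ζ‖₊ := by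
    intro θ
    have hc : ‖circleMap 0 1 θ‖ = 1 := by simp [norm_circleMap_zero]
    rw [rot_lintegral (circleMap 0 1 θ) hc (fun ζ => (↑‖f (z + ζ)‖₊ : ℝ≥0∞)), transl_lintegral z (fun ζ => (↑‖f ζ‖₊ : ℝ≥0∞))]
  simp only [hrot] at hswap
  rw [hswap, setLIntegral_const, Real.volume_Ioc, sub_zero] at hstep
  -- cancel the factor 2π
  have hcancel : ENNReal.ofReal (2*π) * (ENNReal.ofReal ‖f z‖ * volume (ball (0:E') 1))
      ≤ ENNReal.ofReal (2*π) * ∫⁻ ζ in ball z 1, ↑‖f ζ‖₊ := by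
    calc ENNReal.ofReal (2*π) * (ENNReal.ofReal ‖f z‖ * volume (ball (0:E') 1))
        = (ENNReal.ofReal (2*π) * ENNReal.ofReal ‖f z‖) * volume (ball (0:E') 1) := by ring
      _ ≤ (∫⁻ ζ in ball z 1, ↑‖f ζ‖₊) * ENNReal.ofReal (2*π) := hstep
      _ = ENNReal.ofReal (2*π) * ∫⁻ ζ in ball z 1, ↑‖f ζ‖₊ := by ring
  have h2pine : ENNReal.ofReal (2*π) ≠ 0 := by
    simp [ENNReal.ofReal_eq_zero]
    positivity
  have := (ENNReal.mul_le_mul_iff_right h2pine ENNReal.ofReal_ne_top).1 hcancel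
  calc volume (ball (0:E') 1) * ENNReal.ofReal ‖f z‖
      = ENNReal.ofReal ‖f z‖ * volume (ball (0:E') 1) := by ring
    _ ≤ _ := this

end measure

section keybound
variable {n : ℕ}
local notation "E'" => EuclideanSpace ℂ (Fin n)

/-- Key estimate : pointwise bound of a pluriharmonic function by its weighted `p`-integral. -/
lemma key_bound (p α : ℝ) (hp : 1 ≤ p) (hα : 0 < α) {f : E' → ℂ} (hf : Pluriharmonic f)
    {R : ℝ} {z : E'} (hz : ‖z‖ ≤ R) :
    ENNReal.ofReal ‖f z‖ ≤ ENNReal.ofReal (Real.exp ((R+1)^2/(2*α)))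
      * ((volume (ball (0:E') 1))⁻¹
          * ∫⁻ ζ, ENNReal.ofReal ((‖f ζ‖ * Real.exp (-‖ζ‖^2/(2*α)))^p)) ^ (1/p) := by
  set V : ℝ≥0∞ := volume (ball (0:E') 1) with hV
  have hV0 : V ≠ 0 := (measure_ball_pos _ _ one_pos).ne'
  have hVt : V ≠ ⊤ := measure_ball_lt_top.ne
  have hballz : volume (ball z 1) = V := Measure.addHaar_ball_center volume z 1
  set μ : Measure E' := V⁻¹ • (volume.restrict (ball z 1)) with hμ
  have hprob : IsProbabilityMeasure μ := by
    constructor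
    rw [hμ, Measure.smul_apply, Measure.restrict_apply MeasurableSet.univ, Set.univ_inter,
      hballz, smul_eq_mul]
    exact ENNReal.inv_mul_cancel hV0 hVt
  set c : ℝ := Real.exp ((R+1)^2/(2*α)) with hc
  have hc0 : 0 < c := Real.exp_pos _
  set vE : E' → ℂ := fun ζ => Real.exp (-‖ζ‖^2/(2*α)) • f ζ with hvE
  have hvEc : Continuous vE := by
    apply Continuous.fun_smul _ hf.continuous
    exact Real.continuous_exp.comp ((continuous_norm.pow 2).neg.div_const _)
  have hnormvE : ∀ ζ : E', ‖vE ζ‖ = ‖f ζ‖ * Real.exp (-‖ζ‖^2/(2*α)) := by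
    intro ζ
    rw [hvE]
    simp only [norm_smul, Real.norm_eq_abs, _root_.abs_of_pos (Real.exp_pos _)]
    ring
  -- step 1 : |f z| ≤ ∫ |f| dμ
  have hstep1 : ENNReal.ofReal ‖f z‖ ≤ ∫⁻ ζ, ↑‖f ζ‖₊ ∂μ := by
    rw [hμ, lintegral_smul_measure]
    have h1 := ph_meanL1 hf z
    rw [← hV] at h1
    rw [smul_eq_mul, ← ENNReal.div_eq_inv_mul, ENNReal.le_div_iff_mul_le (Or.inl hV0) (Or.inl hVt)]
    calc ENNReal.ofReal ‖f z‖ * V = V * ENNReal.ofReal ‖f z‖ := mul_comm _ _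
      _ ≤ _ := h1
  -- step 2 : insert the weight
  have hstep2 : ∫⁻ ζ, ↑‖f ζ‖₊ ∂μ ≤ ENNReal.ofReal c * ∫⁻ ζ, ↑‖vE ζ‖₊ ∂μ := by
    rw [← lintegral_const_mul' _ _ ENNReal.ofReal_ne_top]
    apply lintegral_mono_ae
    have hball : ∀ᵐ ζ ∂μ, ζ ∈ ball z 1 := by
      rw [hμ]
      exact Measure.ae_smul_measure (ae_restrict_mem measurableSet_ball) _
    filter_upwards [hball] with ζ hζ
    have hnζ : ‖ζ‖ ≤ R + 1 := by
      have := norm_sub_norm_le ζ z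
      rw [← dist_eq_norm'] at this
      have h2 : dist ζ z < 1 := mem_ball.1 hζ
      rw [dist_comm] at h2
      nlinarith [norm_sub_norm_le ζ z, mem_ball.1 hζ, dist_eq_norm ζ z,
        (by rw [dist_eq_norm]; exact norm_sub_norm_le ζ z : ‖ζ‖ - ‖z‖ ≤ dist ζ z)]
    have hexp : Real.exp (‖ζ‖^2/(2*α)) ≤ c := by
      rw [hc]
      apply Real.exp_le_exp.2
      apply div_le_div_of_nonneg_right _ (by positivity)
      · nlinarith [norm_nonneg ζ, norm_nonneg z]
    have hpt : ‖f ζ‖ ≤ c * ‖vE ζ‖ := by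
      rw [hnormvE ζ]
      have hee : Real.exp (‖ζ‖^2/(2*α)) * Real.exp (-‖ζ‖^2/(2*α)) = 1 := by
        rw [← Real.exp_add, show ‖ζ‖^2/(2*α) + -‖ζ‖^2/(2*α) = 0 by ring, Real.exp_zero]
      calc ‖f ζ‖ = Real.exp (‖ζ‖^2/(2*α)) * (Real.exp (-‖ζ‖^2/(2*α)) * ‖f ζ‖) := by
            rw [← mul_assoc, hee, one_mul]
        _ ≤ c * (Real.exp (-‖ζ‖^2/(2*α)) * ‖f ζ‖) :=
            mul_le_mul_of_nonneg_right hexp (by positivity)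
        _ = c * (‖f ζ‖ * Real.exp (-‖ζ‖^2/(2*α))) := by ring
    calc (↑‖f ζ‖₊ : ℝ≥0∞) = ENNReal.ofReal ‖f ζ‖ := (ofReal_norm _).symm
      _ ≤ ENNReal.ofReal (c * ‖vE ζ‖) := ENNReal.ofReal_le_ofReal hpt
      _ = ENNReal.ofReal c * ENNReal.ofReal ‖vE ζ‖ := ENNReal.ofReal_mul hc0.le
      _ = ENNReal.ofReal c * ↑‖vE ζ‖₊ := by rw [ofReal_norm, enorm_eq_nnnorm]
  -- step 3 : Jensen (monotonicity of L^p norms on a probability space)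
  have hjen : ∫⁻ ζ, ↑‖vE ζ‖₊ ∂μ ≤ (∫⁻ ζ, ↑‖vE ζ‖₊ ^ p ∂μ) ^ (1/p) := by
    have h1 : eLpNorm vE 1 μ ≤ eLpNorm vE (ENNReal.ofReal p) μ :=
      eLpNorm_le_eLpNorm_of_exponent_le (ENNReal.one_le_ofReal.2 hp)
        hvEc.aestronglyMeasurable
    rw [eLpNorm_one_eq_lintegral_enorm] at h1
    rw [eLpNorm_eq_lintegral_rpow_enorm_toReal (by simp [ENNReal.ofReal_eq_zero]; linarith)
      ENNReal.ofReal_ne_top, ENNReal.toReal_ofReal (by linarith)] at h1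
    exact h1
  -- step 4 : bound the p-integral by the global weighted integral
  have hstep4 : ∫⁻ ζ, ↑‖vE ζ‖₊ ^ p ∂μ
      ≤ V⁻¹ * ∫⁻ ζ, ENNReal.ofReal ((‖f ζ‖ * Real.exp (-‖ζ‖^2/(2*α)))^p) := by
    rw [hμ, lintegral_smul_measure, smul_eq_mul]
    apply mul_le_mul_right
    calc ∫⁻ ζ in ball z 1, ↑‖vE ζ‖₊ ^ p
        = ∫⁻ ζ in ball z 1, ENNReal.ofReal ((‖f ζ‖ * Real.exp (-‖ζ‖^2/(2*α)))^p) := by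
          apply lintegral_congr
          intro ζ
          rw [← enorm_eq_nnnorm, ← ofReal_norm, ENNReal.ofReal_rpow_of_nonneg (norm_nonneg _)
            (by linarith), hnormvE ζ]
      _ ≤ _ := setLIntegral_le_lintegral _ _
  -- combine
  calc ENNReal.ofReal ‖f z‖ ≤ ∫⁻ ζ, ↑‖f ζ‖₊ ∂μ := hstep1
    _ ≤ ENNReal.ofReal c * ∫⁻ ζ, ↑‖vE ζ‖₊ ∂μ := hstep2
    _ ≤ ENNReal.ofReal c * (∫⁻ ζ, ↑‖vE ζ‖₊ ^ p ∂μ) ^ (1/p) := mul_le_mul_right hjen _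
    _ ≤ ENNReal.ofReal c * ((V⁻¹ * ∫⁻ ζ, ENNReal.ofReal ((‖f ζ‖ * Real.exp (-‖ζ‖^2/(2*α)))^p)) ^ (1/p)) := by
        apply mul_le_mul_right
        exact ENNReal.rpow_le_rpow hstep4 (by positivity)

end keybound

section entire
variable {n : ℕ}
local notation "E'" => EuclideanSpace ℂ (Fin n)

/-- Cauchy estimate: bound the derivative of an entire function by its sup on a unit ball. -/
lemma entire_fderiv_bound {Φ : E' → ℂ} (hΦ : Differentiable ℂ Φ) (z : E') {M : ℝ}
    (hM : ∀ ζ ∈ closedBall z 1, ‖Φ ζ‖ ≤ M) : ‖fderiv ℂ Φ z‖ ≤ M := by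
  have hM0 : 0 ≤ M := le_trans (norm_nonneg _) (hM z (mem_closedBall_self one_pos.le))
  apply ContinuousLinearMap.opNorm_le_bound _ hM0
  intro w
  rcases eq_or_ne w 0 with rfl | hw
  · simp
  · have hw0 : 0 < ‖w‖ := norm_pos_iff.2 hw
    set R : ℝ := 1/‖w‖ with hRdef
    have hR : 0 < R := by positivity
    have hline : ∀ lam : ℂ, HasDerivAt (fun t : ℂ => z + t • w) w lam := by
      intro lam
      have h1 : HasDerivAt (fun t : ℂ => t • w) ((1:ℂ) • w) lam := (hasDerivAt_id lam).smul_const w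
      rw [one_smul] at h1
      exact h1.const_add z
    have hψd : ∀ lam : ℂ,
        HasDerivAt (fun t : ℂ => Φ (z + t • w)) (fderiv ℂ Φ (z + lam • w) w) lam := by
      intro lam
      exact (hΦ.differentiableAt.hasFDerivAt).comp_hasDerivAt lam (hline lam)
    have hψdiff : Differentiable ℂ (fun t : ℂ => Φ (z + t • w)) := fun t => (hψd t).differentiableAt
    have hsphere : ∀ lam ∈ sphere (0:ℂ) R, ‖Φ (z + lam • w)‖ ≤ M := by
      intro lam hlam
      apply hM
      rw [mem_closedBall, dist_eq_norm, add_sub_cancel_left, norm_smul]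
      rw [mem_sphere_zero_iff_norm] at hlam
      rw [hlam, hRdef]
      field_simp
      exact le_rfl
    have hb := norm_deriv_le_of_forall_mem_sphere_norm_le hR hψdiff.diffContOnCl hsphere
    have hd0 : deriv (fun t : ℂ => Φ (z + t • w)) 0 = fderiv ℂ Φ z w := by
      have h := (hψd 0).deriv
      rwa [zero_smul, add_zero] at h
    rw [hd0] at hb
    calc ‖(fderiv ℂ Φ z) w‖ ≤ M / R := hb
      _ = M * ‖w‖ := by rw [hRdef]; field_simp

/-- A locally uniformly Cauchy sequence of entire functions has an entire pointwise limit. -/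
lemma entire_limit {Φ : ℕ → E' → ℂ} (hΦ : ∀ m, Differentiable ℂ (Φ m)) {F : E' → ℂ}
    (hcau : ∀ R : ℝ, ∀ ε : ℝ, 0 < ε → ∃ M, ∀ m ≥ M, ∀ k ≥ M, ∀ z : E', ‖z‖ ≤ R →
      ‖Φ m z - Φ k z‖ ≤ ε)
    (hlim : ∀ z, Tendsto (fun m => Φ m z) atTop (nhds (F z))) :
    Differentiable ℂ F := by
  have hdcau : ∀ R : ℝ, ∀ ε : ℝ, 0 < ε → ∃ M, ∀ m ≥ M, ∀ k ≥ M, ∀ z : E', ‖z‖ ≤ R →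
      ‖fderiv ℂ (Φ m) z - fderiv ℂ (Φ k) z‖ ≤ ε := by
    intro R ε hε
    obtain ⟨M, hM⟩ := hcau (R+1) ε hε
    refine ⟨M, fun m hm k hk z hz => ?_⟩
    have hfd : fderiv ℂ (Φ m) z - fderiv ℂ (Φ k) z = fderiv ℂ (fun ζ => Φ m ζ - Φ k ζ) z :=
      (fderiv_sub (hΦ m).differentiableAt (hΦ k).differentiableAt).symm
    rw [hfd]
    apply entire_fderiv_bound ((hΦ m).sub (hΦ k)) z
    intro ζ hζ
    apply hM m hm k hk
    have h1 : ‖ζ - z‖ ≤ 1 := by rwa [mem_closedBall, dist_eq_norm] at hζ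
    have h2 := norm_sub_norm_le ζ z
    linarith
  have hdcauchy : ∀ z : E', CauchySeq (fun m => fderiv ℂ (Φ m) z) := by
    intro z
    rw [Metric.cauchySeq_iff]
    intro ε hε
    obtain ⟨M, hM⟩ := hdcau ‖z‖ (ε/2) (by linarith)
    refine ⟨M, fun m hm k hk => ?_⟩
    rw [dist_eq_norm]
    calc ‖fderiv ℂ (Φ m) z - fderiv ℂ (Φ k) z‖ ≤ ε/2 := hM m hm k hk z le_rfl
      _ < ε := by linarith
  choose D' hD' using fun z => cauchySeq_tendsto_of_complete (hdcauchy z)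
  have hunif : TendstoLocallyUniformly (fun m z => fderiv ℂ (Φ m) z) D' atTop := by
    rw [tendstoLocallyUniformly_iff_forall_isCompact]
    intro K hK
    obtain ⟨R, hR⟩ := hK.isBounded.subset_closedBall 0
    rw [Metric.tendstoUniformlyOn_iff]
    intro ε hε
    obtain ⟨M, hM⟩ := hdcau R (ε/2) (by linarith)
    rw [eventually_atTop]
    refine ⟨M, fun m hm z hz => ?_⟩
    have hzR : ‖z‖ ≤ R := by
      have := hR hz
      rwa [mem_closedBall, dist_zero_right] at this
    have hle : ‖D' z - fderiv ℂ (Φ m) z‖ ≤ ε/2 := by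
      have h1 : Tendsto (fun k => ‖fderiv ℂ (Φ k) z - fderiv ℂ (Φ m) z‖) atTop
          (nhds ‖D' z - fderiv ℂ (Φ m) z‖) := ((hD' z).sub tendsto_const_nhds).norm
      apply le_of_tendsto h1
      filter_upwards [eventually_ge_atTop M] with k hk using hM k hk m hm z hzR
    rw [dist_eq_norm]
    calc ‖D' z - fderiv ℂ (Φ m) z‖ ≤ ε/2 := hle
      _ < ε := by linarith
  intro z
  have hHas := hasFDerivAt_of_tendstoLocallyUniformlyOn isOpen_univ
    (tendstoLocallyUniformlyOn_univ.2 hunif)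
    (fun m x _ => ((hΦ m) x).hasFDerivAt) (fun x _ => hlim x) (Set.mem_univ z)
  exact hHas.differentiableAt

end entire

section helpers
variable {n : ℕ}
local notation "E'" => EuclideanSpace ℂ (Fin n)

lemma real_tri_pow {p : ℝ} (hp : 1 ≤ p) {a b c W : ℝ} (ha : 0 ≤ a) (hb : 0 ≤ b) (hc : 0 ≤ c)
    (hW : 0 ≤ W) (h : a ≤ b + c) : (a*W)^p ≤ 2^p * ((b*W)^p + (c*W)^p) := by
  have h1 : a*W ≤ b*W + c*W := by nlinarith
  have h2 : (a*W)^p ≤ (b*W + c*W)^p :=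
    Real.rpow_le_rpow (by positivity) h1 (by linarith)
  have h3 : b*W + c*W ≤ 2 * max (b*W) (c*W) := by
    rcases le_total (b*W) (c*W) with hbc | hbc
    · rw [max_eq_right hbc]; linarith
    · rw [max_eq_left hbc]; linarith
  have h4 : (b*W + c*W)^p ≤ (2 * max (b*W) (c*W))^p :=
    Real.rpow_le_rpow (by positivity) h3 (by linarith)
  have h5 : (2 * max (b*W) (c*W))^p = 2^p * (max (b*W) (c*W))^p :=
    Real.mul_rpow (by norm_num) (le_max_of_le_left (by positivity))
  have h6 : (max (b*W) (c*W))^p ≤ (b*W)^p + (c*W)^p := by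
    rcases le_total (b*W) (c*W) with hbc | hbc
    · rw [max_eq_right hbc]
      have : (0:ℝ) ≤ (b*W)^p := Real.rpow_nonneg (by positivity) _
      linarith
    · rw [max_eq_left hbc]
      have : (0:ℝ) ≤ (c*W)^p := Real.rpow_nonneg (by positivity) _
      linarith
  calc (a*W)^p ≤ (2 * max (b*W) (c*W))^p := le_trans h2 h4
    _ = 2^p * (max (b*W) (c*W))^p := h5
    _ ≤ 2^p * ((b*W)^p + (c*W)^p) := by
        apply mul_le_mul_of_nonneg_left h6 (by positivity)

lemma meas_integrand (p α : ℝ) (hp : 0 ≤ p) {u v : E' → ℂ} (hu : Measurable u) (hv : Measurable v) :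
    Measurable fun ζ : E' => ENNReal.ofReal ((‖u ζ - v ζ‖ * Real.exp (-‖ζ‖^2/(2*α)))^p) := by
  apply Measurable.ennreal_ofReal
  have hrp : Continuous fun x : ℝ => x ^ p :=
    continuous_iff_continuousAt.2 fun x => Real.continuousAt_rpow_const x p (Or.inr hp)
  apply hrp.measurable.comp
  apply Measurable.mul ((hu.sub hv).norm)
  exact (Real.continuous_exp.comp ((continuous_norm.pow 2).neg.div_const _)).measurable

lemma T_tri (p α : ℝ) (hp : 1 ≤ p) {u v g : E' → ℂ} (hu : Measurable u) (hv : Measurable v)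
    (hg : Measurable g) :
    ∫⁻ ζ : E', ENNReal.ofReal ((‖u ζ - v ζ‖ * Real.exp (-‖ζ‖^2/(2*α)))^p)
      ≤ ENNReal.ofReal (2^p) *
        ((∫⁻ ζ : E', ENNReal.ofReal ((‖u ζ - g ζ‖ * Real.exp (-‖ζ‖^2/(2*α)))^p))
          + ∫⁻ ζ : E', ENNReal.ofReal ((‖v ζ - g ζ‖ * Real.exp (-‖ζ‖^2/(2*α)))^p)) := by
  rw [← lintegral_add_left (meas_integrand p α (by linarith) hu hg)]
  rw [← lintegral_const_mul' _ _ ENNReal.ofReal_ne_top]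
  apply lintegral_mono
  intro ζ
  have hptw : (‖u ζ - v ζ‖ * Real.exp (-‖ζ‖^2/(2*α)))^p
      ≤ 2^p * ((‖u ζ - g ζ‖ * Real.exp (-‖ζ‖^2/(2*α)))^p
        + (‖v ζ - g ζ‖ * Real.exp (-‖ζ‖^2/(2*α)))^p) := by
    apply real_tri_pow hp (norm_nonneg _) (norm_nonneg _) (norm_nonneg _) (Real.exp_pos _).le
    calc ‖u ζ - v ζ‖ = ‖(u ζ - g ζ) - (v ζ - g ζ)‖ := by ring_nf
      _ ≤ ‖u ζ - g ζ‖ + ‖v ζ - g ζ‖ := norm_sub_le _ _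
  calc ENNReal.ofReal ((‖u ζ - v ζ‖ * Real.exp (-‖ζ‖^2/(2*α)))^p)
      ≤ ENNReal.ofReal (2^p * ((‖u ζ - g ζ‖ * Real.exp (-‖ζ‖^2/(2*α)))^p
          + (‖v ζ - g ζ‖ * Real.exp (-‖ζ‖^2/(2*α)))^p)) := ENNReal.ofReal_le_ofReal hptw
    _ = ENNReal.ofReal (2^p) * ENNReal.ofReal ((‖u ζ - g ζ‖ * Real.exp (-‖ζ‖^2/(2*α)))^p
          + (‖v ζ - g ζ‖ * Real.exp (-‖ζ‖^2/(2*α)))^p) :=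
        ENNReal.ofReal_mul (by positivity)
    _ = _ := by
        rw [ENNReal.ofReal_add (Real.rpow_nonneg (by positivity) _)
          (Real.rpow_nonneg (by positivity) _)]

/-- Uniform smallness of pluriharmonic functions on balls, from smallness of `T`. -/
lemma small_of_T (p α : ℝ) (hp : 1 ≤ p) (hα : 0 < α) (R : ℝ) {ε : ℝ} (hε : 0 < ε) :
    ∃ δ : ℝ≥0∞, 0 < δ ∧ ∀ u : E' → ℂ, Pluriharmonic u →
      (∫⁻ ζ : E', ENNReal.ofReal ((‖u ζ‖ * Real.exp (-‖ζ‖^2/(2*α)))^p)) ≤ δ →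
      ∀ z : E', ‖z‖ ≤ R → ‖u z‖ ≤ ε := by
  have hp0 : p ≠ 0 := by linarith
  set V : ℝ≥0∞ := volume (ball (0:E') 1) with hV
  have hV0 : V ≠ 0 := (measure_ball_pos _ _ one_pos).ne'
  have hVt : V ≠ ⊤ := measure_ball_lt_top.ne
  set cc : ℝ := Real.exp ((R+1)^2/(2*α)) with hcc
  have hcc0 : ENNReal.ofReal cc ≠ 0 := by
    simp [ENNReal.ofReal_eq_zero, hcc]
    positivity
  set γ : ℝ≥0∞ := ENNReal.ofReal ε / ENNReal.ofReal cc with hγ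
  have hγ0 : γ ≠ 0 := by
    rw [hγ]
    intro h
    rw [ENNReal.div_eq_zero_iff] at h
    rcases h with h | h
    · rw [ENNReal.ofReal_eq_zero] at h; linarith
    · exact ENNReal.ofReal_ne_top h
  have hγt : γ ≠ ⊤ := by
    rw [hγ]
    exact (ENNReal.div_lt_top ENNReal.ofReal_ne_top hcc0).ne
  refine ⟨γ ^ p * V, ?_, ?_⟩
  · apply ENNReal.mul_pos _ hV0
    intro h
    rw [ENNReal.rpow_eq_zero_iff] at h
    rcases h with ⟨h1, _⟩ | ⟨h1, _⟩
    · exact hγ0 h1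
    · exact hγt h1
  · intro u hu hTu z hz
    have hkb := key_bound p α hp hα hu hz
    have h1 : V⁻¹ * (∫⁻ ζ : E', ENNReal.ofReal ((‖u ζ‖ * Real.exp (-‖ζ‖^2/(2*α)))^p)) ≤ γ ^ p := by
      calc V⁻¹ * _ ≤ V⁻¹ * (γ ^ p * V) := mul_le_mul_right hTu _
        _ = γ ^ p * (V⁻¹ * V) := by ring
        _ = γ ^ p := by rw [ENNReal.inv_mul_cancel hV0 hVt, mul_one]
    have h2 : (V⁻¹ * (∫⁻ ζ : E', ENNReal.ofReal ((‖u ζ‖ * Real.exp (-‖ζ‖^2/(2*α)))^p))) ^ (1/p)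
        ≤ γ := by
      calc _ ≤ (γ ^ p) ^ (1/p) := ENNReal.rpow_le_rpow h1 (by positivity)
        _ = γ ^ (p * (1/p)) := by rw [← ENNReal.rpow_mul]
        _ = γ := by rw [mul_one_div, div_self hp0, ENNReal.rpow_one]
    have h3 : ENNReal.ofReal ‖u z‖ ≤ ENNReal.ofReal ε := by
      calc ENNReal.ofReal ‖u z‖ ≤ ENNReal.ofReal cc * _ := hkb
        _ ≤ ENNReal.ofReal cc * γ := mul_le_mul_right h2 _
        _ = ENNReal.ofReal ε := ENNReal.mul_div_cancel hcc0 ENNReal.ofReal_ne_top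
    exact (ENNReal.ofReal_le_ofReal_iff hε.le).1 h3

end helpers

/-- `‖f‖_{p,α}^p = (p/(2πα))^n ∫_{ℂⁿ} |f(z) e^{-|z|²/(2α)}|^p dA(z)`, as a value in `[0,∞]`. -/
noncomputable def fockNormP (n : ℕ) (p α : ℝ) (f : EuclideanSpace ℂ (Fin n) → ℂ) : ℝ≥0∞ :=
  ENNReal.ofReal ((p / (2 * π * α)) ^ n) *
    ∫⁻ z, ENNReal.ofReal ((‖f z‖ * Real.exp (-‖z‖ ^ 2 / (2 * α))) ^ p)

/-- auxiliary : the weighted `p`-integral without the constant factor. -/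
noncomputable def Tnorm (n : ℕ) (p α : ℝ) (u : EuclideanSpace ℂ (Fin n) → ℂ) : ℝ≥0∞ :=
  ∫⁻ ζ, ENNReal.ofReal ((‖u ζ‖ * Real.exp (-‖ζ‖ ^ 2 / (2 * α))) ^ p)

/-- For `1 ≤ p < ∞` and `α > 0`, `PH^p_α` is closed in `L^p_α`: if `(f_m)`
is a sequence of pluriharmonic functions with finite `‖·‖_{p,α}`-norm and `f` is a measurable
function with `‖f_m − f‖_{p,α} → 0`, then `f` agrees a.e. with a pluriharmonic function. -/
theorem pluriharmonicFockSpaceClosed (n : ℕ) (hn : 0 < n) (p α : ℝ)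
    (hp : 1 ≤ p) (hα : 0 < α)
    (f : ℕ → EuclideanSpace ℂ (Fin n) → ℂ)
    (hph : ∀ m, Pluriharmonic (f m))
    (hfin : ∀ m, fockNormP n p α (f m) < ⊤)
    (g : EuclideanSpace ℂ (Fin n) → ℂ) (hg : Measurable g)
    (hconv : Filter.Tendsto (fun m => fockNormP n p α (fun z => f m z - g z))
      Filter.atTop (nhds 0)) :
    ∃ g₀ : EuclideanSpace ℂ (Fin n) → ℂ, Pluriharmonic g₀ ∧ g =ᵐ[volume] g₀ := by
  classical
  have hp0 : (0:ℝ) < p := by linarith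
  have hfmc : ∀ m, Continuous (f m) := fun m => (hph m).continuous
  -- the constant in the Fock norm
  have hc0pos : (0:ℝ) < (p / (2*π*α))^n := by positivity
  set c₀ : ℝ≥0∞ := ENNReal.ofReal ((p / (2*π*α))^n) with hc₀def
  have hc00 : c₀ ≠ 0 := by
    rw [hc₀def]
    simp only [ne_eq, ENNReal.ofReal_eq_zero, not_le]
    exact hc0pos
  have hc0t : c₀ ≠ ⊤ := ENNReal.ofReal_ne_top
  have hfock : ∀ u : EuclideanSpace ℂ (Fin n) → ℂ,
      fockNormP n p α u = c₀ * Tnorm n p α u := fun u => rfl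
  -- T tends to zero
  have hTconv : Tendsto (fun m => Tnorm n p α (fun z => f m z - g z)) atTop (nhds 0) := by
    have h1 := ENNReal.Tendsto.const_mul (a := c₀⁻¹) hconv
      (Or.inr (ENNReal.inv_ne_top.2 hc00))
    simp only [hfock, ← mul_assoc, ENNReal.inv_mul_cancel hc00 hc0t, one_mul, mul_zero] at h1
    exact h1
  -- uniform Cauchy property on balls
  have hUC : ∀ R : ℝ, ∀ ε : ℝ, 0 < ε → ∃ M : ℕ, ∀ m ≥ M, ∀ k ≥ M,
      ∀ z : EuclideanSpace ℂ (Fin n), ‖z‖ ≤ R → ‖f m z - f k z‖ ≤ ε := by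
    intro R ε hε
    obtain ⟨δ, hδ0, hδ⟩ := small_of_T p α hp hα R hε
    set Cp : ℝ≥0∞ := ENNReal.ofReal (2^p) with hCpdef
    have hCpt : Cp ≠ ⊤ := ENNReal.ofReal_ne_top
    set δ' : ℝ≥0∞ := δ / (2 * Cp) with hδ'def
    have hδ'0 : 0 < δ' := ENNReal.div_pos hδ0.ne' (ENNReal.mul_ne_top (by norm_num) hCpt)
    have hev : ∀ᶠ m in atTop, Tnorm n p α (fun z => f m z - g z) < δ' :=
      hTconv.eventually_lt_const hδ'0
    obtain ⟨M, hM⟩ := eventually_atTop.1 hev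
    refine ⟨M, fun m hm k hk z hz => ?_⟩
    apply hδ _ ((hph m).sub (hph k)) _ z hz
    have h1 := T_tri p α hp (hfmc m).measurable (hfmc k).measurable hg
    calc (∫⁻ ζ, ENNReal.ofReal ((‖(fun w => f m w - f k w) ζ‖ * Real.exp (-‖ζ‖^2/(2*α)))^p))
        ≤ Cp * ((∫⁻ ζ, ENNReal.ofReal ((‖f m ζ - g ζ‖ * Real.exp (-‖ζ‖^2/(2*α)))^p))
          + ∫⁻ ζ, ENNReal.ofReal ((‖f k ζ - g ζ‖ * Real.exp (-‖ζ‖^2/(2*α)))^p)) := h1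
      _ ≤ Cp * (δ' + δ') := by
          apply mul_le_mul_right
          exact add_le_add (hM m hm).le (hM k hk).le
      _ = (2 * Cp) * δ' := by ring
      _ ≤ δ := ENNReal.mul_div_le
  -- pointwise limit F
  have hcauchy : ∀ z, CauchySeq fun m => f m z := by
    intro z
    rw [Metric.cauchySeq_iff]
    intro ε hε
    obtain ⟨M, hM⟩ := hUC ‖z‖ (ε/2) (by linarith)
    refine ⟨M, fun m hm k hk => ?_⟩
    rw [dist_eq_norm]
    calc ‖f m z - f k z‖ ≤ ε/2 := hM m hm k hk z le_rfl
      _ < ε := by linarith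
  choose F hF using fun z => cauchySeq_tendsto_of_complete (hcauchy z)
  -- uniform convergence to F on balls
  have hFunif : ∀ R : ℝ, ∀ ε : ℝ, 0 < ε → ∃ M : ℕ, ∀ m ≥ M,
      ∀ z : EuclideanSpace ℂ (Fin n), ‖z‖ ≤ R → ‖f m z - F z‖ ≤ ε := by
    intro R ε hε
    obtain ⟨M, hM⟩ := hUC R ε hε
    refine ⟨M, fun m hm z hz => ?_⟩
    have h1 : Tendsto (fun k => ‖f m z - f k z‖) atTop (nhds ‖f m z - F z‖) :=
      (tendsto_const_nhds.sub (hF z)).norm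
    apply le_of_tendsto h1
    filter_upwards [eventually_ge_atTop M] with k hk using hM m hm k hk z hz
  -- continuity of F
  have hFcont : Continuous F := by
    have hTLU : TendstoLocallyUniformly f F atTop := by
      rw [tendstoLocallyUniformly_iff_forall_isCompact]
      intro K hK
      obtain ⟨R, hR⟩ := hK.isBounded.subset_closedBall 0
      rw [Metric.tendstoUniformlyOn_iff]
      intro ε hε
      obtain ⟨M, hM⟩ := hFunif R (ε/2) (by linarith)
      rw [eventually_atTop]
      refine ⟨M, fun m hm z hz => ?_⟩
      have hzR : ‖z‖ ≤ R := by
        have := hR hz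
        rwa [mem_closedBall, dist_zero_right] at this
      rw [dist_eq_norm]
      calc ‖F z - f m z‖ = ‖f m z - F z‖ := norm_sub_rev _ _
        _ ≤ ε/2 := hM m hm z hzR
        _ < ε := by linarith
    exact hTLU.continuous (Frequently.of_forall fun m => (hph m).continuous)
  -- normalized decompositions
  choose G H hG hH hGH using fun m => hph m
  set G' : ℕ → EuclideanSpace ℂ (Fin n) → ℂ :=
    fun m z => G m z + (starRingEnd ℂ) (H m 0) with hG'def
  set H' : ℕ → EuclideanSpace ℂ (Fin n) → ℂ := fun m z => H m z - H m 0 with hH'def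
  have hG'd : ∀ m, Differentiable ℂ (G' m) := fun m => (hG m).add_const _
  have hH'd : ∀ m, Differentiable ℂ (H' m) := fun m => (hH m).sub_const _
  have hsplit : ∀ m z, f m z = G' m z + (starRingEnd ℂ) (H' m z) := by
    intro m z
    rw [hGH m z]
    simp only [hG'def, hH'def, map_sub]
    ring
  have hH'0 : ∀ m, H' m 0 = 0 := fun m => sub_self _
  have hrec : ∀ m z, ∫ θ in (0:ℝ)..(2*π),
      (circleMap 0 2 θ / (circleMap 0 2 θ - 1)) * f m (circleMap 0 2 θ • z)
      = (2*π) * G' m z := fun m z => ph_recover (hG'd m) (hH'd m) (hH'0 m) (hsplit m) z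
  have hπpos : (0:ℝ) < 2*π := by positivity
  have hπ0 : ((2*π : ℝ) : ℂ) ≠ 0 := by
    simp only [ne_eq, Complex.ofReal_eq_zero]
    positivity
  have hnπ : ‖((2*π : ℝ) : ℂ)‖ = 2*π := by
    rw [Complex.norm_real, Real.norm_eq_abs, _root_.abs_of_pos hπpos]
  set GG : EuclideanSpace ℂ (Fin n) → ℂ := fun z =>
    (∫ θ in (0:ℝ)..(2*π),
      (circleMap 0 2 θ / (circleMap 0 2 θ - 1)) * F (circleMap 0 2 θ • z)) / ((2*π : ℝ) : ℂ)
    with hGGdef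
  have hG'eq : ∀ m z, G' m z = (∫ θ in (0:ℝ)..(2*π),
      (circleMap 0 2 θ / (circleMap 0 2 θ - 1)) * f m (circleMap 0 2 θ • z)) / ((2*π : ℝ) : ℂ) := by
    intro m z
    rw [eq_div_iff hπ0, hrec m z]
    push_cast
    ring
  have hsmul2 : ∀ (θ : ℝ) (z : EuclideanSpace ℂ (Fin n)), ‖circleMap 0 2 θ • z‖ = 2*‖z‖ := by
    intro θ z
    rw [norm_smul]
    congr 1
    simp [norm_circleMap_zero]
  -- pointwise convergence of the holomorphic parts
  have harith : ∀ ε : ℝ, 0 < ε → 4*π*(ε/4)/(2*π) = ε/2 := by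
    intro ε hε
    field_simp
  have hGlim : ∀ z, Tendsto (fun m => G' m z) atTop (nhds (GG z)) := by
    intro z
    rw [Metric.tendsto_atTop]
    intro ε hε
    obtain ⟨M, hM⟩ := hFunif (2*‖z‖) (ε/4) (by positivity)
    refine ⟨M, fun m hm => ?_⟩
    have hb : ∀ θ : ℝ, ‖f m (circleMap 0 2 θ • z) - F (circleMap 0 2 θ • z)‖ ≤ ε/4 := by
      intro θ
      apply hM m hm
      rw [hsmul2]
    have h2 := P_sub_bound (hfmc m) hFcont z hb
    rw [dist_eq_norm, hG'eq m z, hGGdef]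
    rw [div_sub_div_same, norm_div, hnπ]
    calc _ ≤ 4*π*(ε/4)/(2*π) := by gcongr
      _ = ε/2 := harith ε hε
      _ < ε := by linarith
  -- uniform Cauchy property of the holomorphic parts
  have hGcau : ∀ R : ℝ, ∀ ε : ℝ, 0 < ε → ∃ M : ℕ, ∀ m ≥ M, ∀ k ≥ M,
      ∀ z : EuclideanSpace ℂ (Fin n), ‖z‖ ≤ R → ‖G' m z - G' k z‖ ≤ ε := by
    intro R ε hε
    obtain ⟨M, hM⟩ := hUC (2*R) (ε/4) (by positivity)
    refine ⟨M, fun m hm k hk z hz => ?_⟩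
    have hb : ∀ θ : ℝ, ‖f m (circleMap 0 2 θ • z) - f k (circleMap 0 2 θ • z)‖ ≤ ε/4 := by
      intro θ
      apply hM m hm k hk
      rw [hsmul2]
      linarith
    have h2 := P_sub_bound (hfmc m) (hfmc k) z hb
    rw [hG'eq m z, hG'eq k z, div_sub_div_same, norm_div, hnπ]
    calc _ ≤ 4*π*(ε/4)/(2*π) := by gcongr
      _ = ε/2 := harith ε hε
      _ ≤ ε := by linarith
  have hGGd : Differentiable ℂ GG := entire_limit hG'd hGcau hGlim
  -- conjugate part
  set HH : EuclideanSpace ℂ (Fin n) → ℂ := fun z => (starRingEnd ℂ) (F z - GG z) with hHHdef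
  have hH'eq : ∀ m z, H' m z = (starRingEnd ℂ) (f m z - G' m z) := by
    intro m z
    rw [hsplit m z]
    simp
  have hHlim : ∀ z, Tendsto (fun m => H' m z) atTop (nhds (HH z)) := by
    intro z
    have h1 : Tendsto (fun m => f m z - G' m z) atTop (nhds (F z - GG z)) :=
      (hF z).sub (hGlim z)
    have h2 := (Complex.continuous_conj.tendsto _).comp h1
    simp only [Function.comp_def] at h2
    simp only [hH'eq]
    exact h2
  have hHcau : ∀ R : ℝ, ∀ ε : ℝ, 0 < ε → ∃ M : ℕ, ∀ m ≥ M, ∀ k ≥ M,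
      ∀ z : EuclideanSpace ℂ (Fin n), ‖z‖ ≤ R → ‖H' m z - H' k z‖ ≤ ε := by
    intro R ε hε
    obtain ⟨M1, hM1⟩ := hUC R (ε/2) (by linarith)
    obtain ⟨M2, hM2⟩ := hGcau R (ε/2) (by linarith)
    refine ⟨max M1 M2, fun m hm k hk z hz => ?_⟩
    have h1 : H' m z - H' k z
        = (starRingEnd ℂ) ((f m z - f k z) - (G' m z - G' k z)) := by
      rw [hH'eq m z, hH'eq k z, ← map_sub]
      congr 1
      ring
    rw [h1]
    rw [RCLike.norm_conj]
    calc ‖(f m z - f k z) - (G' m z - G' k z)‖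
        ≤ ‖f m z - f k z‖ + ‖G' m z - G' k z‖ := norm_sub_le _ _
      _ ≤ ε/2 + ε/2 := add_le_add
          (hM1 m (le_trans (le_max_left _ _) hm) k (le_trans (le_max_left _ _) hk) z hz)
          (hM2 m (le_trans (le_max_right _ _) hm) k (le_trans (le_max_right _ _) hk) z hz)
      _ = ε := by ring
  have hHHd : Differentiable ℂ HH := entire_limit hH'd hHcau hHlim
  have hFph : Pluriharmonic F := by
    refine ⟨GG, HH, hGGd, hHHd, fun z => ?_⟩
    rw [hHHdef]
    simp only [Complex.conj_conj]
    ring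
  -- F agrees almost everywhere with g
  have hptlim : ∀ ζ, Tendsto
      (fun m => ENNReal.ofReal ((‖f m ζ - g ζ‖ * Real.exp (-‖ζ‖^2/(2*α)))^p)) atTop
      (nhds (ENNReal.ofReal ((‖F ζ - g ζ‖ * Real.exp (-‖ζ‖^2/(2*α)))^p))) := by
    intro ζ
    have h1 : Tendsto (fun m => ‖f m ζ - g ζ‖ * Real.exp (-‖ζ‖^2/(2*α))) atTop
        (nhds (‖F ζ - g ζ‖ * Real.exp (-‖ζ‖^2/(2*α)))) :=
      (((hF ζ).sub_const _).norm).mul_const _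
    have h2 := ((Real.continuousAt_rpow_const _ p (Or.inr (by linarith))).tendsto).comp h1
    have h3 := (ENNReal.continuous_ofReal.tendsto _).comp h2
    simpa [Function.comp_def] using h3
  have hφmeas : ∀ m : ℕ, Measurable fun ζ : EuclideanSpace ℂ (Fin n) =>
      ENNReal.ofReal ((‖f m ζ - g ζ‖ * Real.exp (-‖ζ‖^2/(2*α)))^p) :=
    fun m => meas_integrand p α (by linarith) (hfmc m).measurable hg
  have hFint0 : ∫⁻ ζ, ENNReal.ofReal ((‖F ζ - g ζ‖ * Real.exp (-‖ζ‖^2/(2*α)))^p) = 0 := by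
    have h1 := lintegral_liminf_le (μ := volume) (u := atTop) hφmeas
    have h2 : ∫⁻ ζ, ENNReal.ofReal ((‖F ζ - g ζ‖ * Real.exp (-‖ζ‖^2/(2*α)))^p)
        = ∫⁻ ζ, liminf (fun m => ENNReal.ofReal
            ((‖f m ζ - g ζ‖ * Real.exp (-‖ζ‖^2/(2*α)))^p)) atTop :=
      lintegral_congr fun ζ => ((hptlim ζ).liminf_eq).symm
    have h3 : liminf (fun m => ∫⁻ ζ, ENNReal.ofReal
        ((‖f m ζ - g ζ‖ * Real.exp (-‖ζ‖^2/(2*α)))^p)) atTop = 0 := by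
      have h4 : (fun m : ℕ => ∫⁻ ζ, ENNReal.ofReal
          ((‖f m ζ - g ζ‖ * Real.exp (-‖ζ‖^2/(2*α)))^p))
          = fun m => Tnorm n p α (fun z => f m z - g z) := rfl
      rw [h4]
      exact hTconv.liminf_eq
    apply le_antisymm _ zero_le
    rw [h2, ← h3]
    exact h1
  have hae := (lintegral_eq_zero_iff
    (meas_integrand p α (by linarith) hFcont.measurable hg)).1 hFint0
  refine ⟨F, hFph, ?_⟩
  filter_upwards [hae] with ζ hζ
  have hζ' : ENNReal.ofReal ((‖F ζ - g ζ‖ * Real.exp (-‖ζ‖^2/(2*α)))^p) = 0 := hζ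
  have h1 : (‖F ζ - g ζ‖ * Real.exp (-‖ζ‖^2/(2*α)))^p = 0 := by
    have h2 := ENNReal.ofReal_eq_zero.1 hζ'
    have h3 : (0:ℝ) ≤ (‖F ζ - g ζ‖ * Real.exp (-‖ζ‖^2/(2*α)))^p :=
      Real.rpow_nonneg (by positivity) _
    linarith
  have h4 : ‖F ζ - g ζ‖ * Real.exp (-‖ζ‖^2/(2*α)) = 0 :=
    (Real.rpow_eq_zero (by positivity) (by linarith : p ≠ 0)).1 h1
  have h5 : ‖F ζ - g ζ‖ = 0 := by
    rcases mul_eq_zero.1 h4 with h | h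
    · exact h
    · exact absurd h (Real.exp_pos _).ne'
  have h6 : F ζ - g ζ = 0 := norm_eq_zero.1 h5
  have h7 : F ζ = g ζ := by
    have := sub_eq_zero.1 h6
    exact this
  exact h7.symm
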